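/- Let G be a graph of odd order. Then switching G with respect to the set of its odd-degree vertices yields a graph in which every vertex has even degree. -/

import Mathlib

open Matrix Finset

/-- Seidel switching of a graph with respect to a set of vertices `A`:
adjacencies between `A` and its complement are complemented, others unchanged. -/
def switchGraph {n : ℕ} (G : SimpleGraph (Fin n)) (A : Finset (Fin n)) :
    SimpleGraph (Fin n) where
  Adj v w := v ≠ w ∧ (G.Adj v w ↔ ((v ∈ A) ↔ (w ∈ A)))
  symm := ⟨by
    intro v w ⟨h1, h2⟩
    exact ⟨h1.symm, by rw [G.adj_comm]; tauto⟩⟩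
  loopless := ⟨fun v h => h.1 rfl⟩

instance {n : ℕ} (G : SimpleGraph (Fin n)) [DecidableRel G.Adj] (A : Finset (Fin n)) :
    DecidableRel (switchGraph G A).Adj :=
  fun v w => inferInstanceAs (Decidable (v ≠ w ∧ (G.Adj v w ↔ ((v ∈ A) ↔ (w ∈ A)))))

theorem switch_odd_vertices_even {n : ℕ} (hn : Odd n)
    (G : SimpleGraph (Fin n)) [DecidableRel G.Adj] :
    ∀ v, Even ((switchGraph G (Finset.univ.filter fun v => Odd (G.degree v))).degree v) := by
  intro v
  set A : Finset (Fin n) := Finset.univ.filter fun v => Odd (G.degree v) with hA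
  -- degree in switched graph as filter card
  have hdeg : (switchGraph G A).degree v =
      (univ.filter fun w => (G.Adj v w ↔ ((v ∈ A) ↔ (w ∈ A)))).card := by
    show ((switchGraph G A).neighborFinset v).card = _
    rw [SimpleGraph.neighborFinset_eq_filter]
    congr 1
    apply Finset.filter_congr
    intro w _
    constructor
    · rintro ⟨_, h⟩; exact h
    · intro h
      refine ⟨?_, h⟩
      rintro rfl
      exact G.loopless.irrefl v (h.mpr (Iff.rfl))
  set Q : Fin n → Prop := fun w => (v ∈ A) ↔ (w ∈ A) with hQ
  have hsplit : (univ.filter fun w => (G.Adj v w ↔ Q w)).card =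
      (univ.filter fun w => G.Adj v w ∧ Q w).card +
      (univ.filter fun w => ¬ G.Adj v w ∧ ¬ Q w).card := by
    rw [← Finset.card_union_of_disjoint]
    · congr 1
      ext w
      simp only [mem_filter, mem_union, mem_univ, true_and]
      tauto
    · rw [Finset.disjoint_filter]
      tauto
  have h1 : (univ.filter fun w => G.Adj v w ∧ Q w).card +
      (univ.filter fun w => G.Adj v w ∧ ¬ Q w).card = G.degree v := by
    rw [← Finset.card_union_of_disjoint]
    · show _ = (G.neighborFinset v).card
      rw [SimpleGraph.neighborFinset_eq_filter]
      congr 1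
      ext w
      simp only [mem_filter, mem_union, mem_univ, true_and]
      tauto
    · rw [Finset.disjoint_filter]; tauto
  have h2 : (univ.filter fun w => ¬ G.Adj v w ∧ ¬ Q w).card +
      (univ.filter fun w => G.Adj v w ∧ ¬ Q w).card =
      (univ.filter fun w => ¬ Q w).card := by
    rw [← Finset.card_union_of_disjoint]
    · congr 1
      ext w
      simp only [mem_filter, mem_union, mem_univ, true_and]
      tauto
    · rw [Finset.disjoint_filter]; tauto
  have key : (switchGraph G A).degree v +
      2 * (univ.filter fun w => G.Adj v w ∧ ¬ Q w).card =
      G.degree v + (univ.filter fun w => ¬ Q w).card := by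
    rw [hdeg, hsplit]; omega
  have hAeven : Even A.card := G.even_card_odd_degree_vertices
  have hEvenSum : Even (G.degree v + (univ.filter fun w => ¬ Q w).card) := by
    by_cases hv : v ∈ A
    · have hdv : Odd (G.degree v) := by
        rw [hA] at hv; simpa using hv
      have hcard : (univ.filter fun w => ¬ Q w).card = n - A.card := by
        have : (univ.filter fun w => ¬ Q w) = Aᶜ := by
          ext w; simp [hQ, hv]
        rw [this, Finset.card_compl]
        simp
      rw [hcard]
      have hn' : A.card ≤ n := by
        simpa using Finset.card_le_card (Finset.subset_univ A)
      obtain ⟨a, ha⟩ := hAeven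
      obtain ⟨k, hk⟩ := hn
      obtain ⟨d, hd⟩ := hdv
      rw [Nat.even_iff]
      omega
    · have hdv : ¬ Odd (G.degree v) := by
        intro h
        exact hv (by rw [hA]; simpa using h)
      have hcard : (univ.filter fun w => ¬ Q w) = A := by
        ext w; simp [hQ, hv]
      rw [hcard]
      rw [Nat.not_odd_iff_even] at hdv
      exact hdv.add hAeven
  rw [Nat.even_iff] at hEvenSum ⊢
  omega
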